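/- If teams T and T' are (k)-bisimilar (k ≥ 0 arbitrary, including k+1 form), then for every splitting T = T_1 ∪ T_2 with T_1,T_2 ⊆ T there exist T_1',T_2' ⊆ T' with T_1' ∪ T_2' = T' such that T_i and T_i' are k-bisimilar for i = 1,2. -/
import Mathlib


structure KModel (W : Type) where
  R : W → W → Prop
  V : ℕ → Set W

inductive MF : Type
  | prop : ℕ → MF
  | bot : MF
  | neg : MF → MF
  | or : MF → MF → MF
  | and : MF → MF → MF
  | dia : MF → MF
  | box : MF → MF

def MF.top : MF := MF.neg MF.bot

def wSat {W : Type} (M : KModel W) : W → MF → Prop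
  | w, .prop p => w ∈ M.V p
  | _, .bot => False
  | w, .neg a => ¬ wSat M w a
  | w, .or a b => wSat M w a ∨ wSat M w b
  | w, .and a b => wSat M w a ∧ wSat M w b
  | w, .dia a => ∃ v, M.R w v ∧ wSat M v a
  | w, .box a => ∀ v, M.R w v → wSat M v a

inductive IncForm : Type
  | prop : ℕ → IncForm
  | bot : IncForm
  | incl : List MF → List MF → IncForm
  | neg : MF → IncForm
  | or : IncForm → IncForm → IncForm
  | and : IncForm → IncForm → IncForm
  | dia : IncForm → IncForm
  | box : IncForm → IncForm

/-- image R[T] -/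
def img {W : Type} (M : KModel W) (T : Set W) : Set W := {v | ∃ w ∈ T, M.R w v}

/-- successor team relation: S ⊆ R[T] and T ⊆ R⁻¹[S] -/
def succTeam {W : Type} (M : KModel W) (T S : Set W) : Prop :=
  (∀ v ∈ S, ∃ w ∈ T, M.R w v) ∧ (∀ w ∈ T, ∃ v ∈ S, M.R w v)

def TSat {W : Type} (M : KModel W) : Set W → IncForm → Prop
  | T, .prop p => T ⊆ M.V p
  | T, .bot => T = ∅
  | T, .incl as bs => ∀ w ∈ T, ∃ v ∈ T, ∀ i, ∀ (h1 : i < as.length) (h2 : i < bs.length),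
      (wSat M w (as.get ⟨i, h1⟩) ↔ wSat M v (bs.get ⟨i, h2⟩))
  | T, .neg a => ∀ w ∈ T, ¬ wSat M w a
  | T, .or f g => ∃ T1 T2, T1 ∪ T2 = T ∧ TSat M T1 f ∧ TSat M T2 g
  | T, .and f g => TSat M T f ∧ TSat M T g
  | T, .dia f => ∃ S, succTeam M T S ∧ TSat M S f
  | T, .box f => TSat M (img M T) f

/-- embedding of classical formulas into ML(⊆) -/
def toInc : MF → IncForm
  | .prop p => .prop p
  | .bot => .bot
  | .neg a => .neg a
  | .or a b => .or (toInc a) (toInc b)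
  | .and a b => .and (toInc a) (toInc b)
  | .dia a => .dia (toInc a)
  | .box a => .box (toInc a)

/-- translate a Boolean constant to ⊤ or ⊥ -/
def ofBool : Bool → MF := fun x => if x then MF.top else MF.bot

/-- α^⊤ = α, α^⊥ = ¬α -/
def signed : Bool → MF → MF := fun x a => if x then a else a.neg

/-- a^x = α₁^{x₁} ∧ ... ∧ αₙ^{xₙ} -/
def conjSigned (xs : List Bool) (as : List MF) : MF :=
  (List.zipWith signed xs as).foldr MF.and MF.top

/-- world X,k-bisimilarity between pointed models -/
def wBisim {W W' : Type} (M : KModel W) (M' : KModel W') (X : Set ℕ) :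
    ℕ → W → W' → Prop
  | 0, w, w' => ∀ p ∈ X, (w ∈ M.V p ↔ w' ∈ M'.V p)
  | k+1, w, w' =>
      (∀ p ∈ X, (w ∈ M.V p ↔ w' ∈ M'.V p))
      ∧ (∀ v, M.R w v → ∃ v', M'.R w' v' ∧ wBisim M M' X k v v')
      ∧ (∀ v', M'.R w' v' → ∃ v, M.R w v ∧ wBisim M M' X k v v')

/-- team X,k-bisimilarity -/
def tBisim {W W' : Type} (M : KModel W) (M' : KModel W') (X : Set ℕ) (k : ℕ)
    (T : Set W) (T' : Set W') : Prop :=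
  (∀ w ∈ T, ∃ w' ∈ T', wBisim M M' X k w w')
  ∧ (∀ w' ∈ T', ∃ w ∈ T, wBisim M M' X k w w')

theorem stmt16 {W W' : Type} (M : KModel W) (M' : KModel W')
    (X : Set ℕ) (k : ℕ) (T : Set W) (T' : Set W')
    (hb : tBisim M M' X k T T') :
    ∀ T1 T2 : Set W, T1 ⊆ T → T2 ⊆ T → T1 ∪ T2 = T →
      ∃ T1' T2' : Set W', T1' ⊆ T' ∧ T2' ⊆ T' ∧ T1' ∪ T2' = T'
        ∧ tBisim M M' X k T1 T1' ∧ tBisim M M' X k T2 T2' := by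
  intro T1 T2 h1 h2 hu
  refine ⟨{w' ∈ T' | ∃ w ∈ T1, wBisim M M' X k w w'},
          {w' ∈ T' | ∃ w ∈ T2, wBisim M M' X k w w'},
          fun _ h => h.1, fun _ h => h.1, ?_, ?_, ?_⟩
  · apply Set.Subset.antisymm
    · rintro w' (h | h) <;> exact h.1
    · intro w' hw'
      obtain ⟨w, hw, hb'⟩ := hb.2 w' hw'
      rw [← hu] at hw
      cases hw with
      | inl h => exact Or.inl ⟨hw', w, h, hb'⟩
      | inr h => exact Or.inr ⟨hw', w, h, hb'⟩
  · constructor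
    · intro w hw
      obtain ⟨w', hw', hb'⟩ := hb.1 w (h1 hw)
      exact ⟨w', ⟨hw', w, hw, hb'⟩, hb'⟩
    · rintro w' ⟨_, w, hw, hb'⟩
      exact ⟨w, hw, hb'⟩
  · constructor
    · intro w hw
      obtain ⟨w', hw', hb'⟩ := hb.1 w (h2 hw)
      exact ⟨w', ⟨hw', w, hw, hb'⟩, hb'⟩
    · rintro w' ⟨_, w, hw, hb'⟩
      exact ⟨w, hw, hb'⟩
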